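/- arXiv:2006.09361 — 3 statements merged into one kernel-verified Lean document; each statement's English description precedes it below -/
import Mathlib

section
/- Let f : ℝ^{d1} × ℝ^{d2} → ℝ be differentiable with ℓ-Lipschitz gradient and μ-strongly concave in y for every fixed x (0 < μ ≤ ℓ), and let Φ(x) = max_{y} f(x,y) with κ = ℓ/μ. Then for every (x,y) ∈ ℝ^{d1} × ℝ^{d2}: ‖∇Φ(x) − ∇_x f(x,y)‖ ≤ κ ‖∇_y f(x,y)‖. -/
open InnerProductSpace

variable {E : Type*} [NormedAddCommGroup E] [InnerProductSpace ℝ E] [CompleteSpace E]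

lemma fderiv_apply_eq_inner_gradient (h : E → ℝ) (x v : E) :
    fderiv ℝ h x v = (inner ℝ (gradient h x) v : ℝ) := by
  rw [← InnerProductSpace.toDual_apply_apply]
  simp [gradient]

lemma norm_fderiv_sub_eq (h : E → ℝ) (z x : E) :
    ‖fderiv ℝ h z - fderiv ℝ h x‖ = ‖gradient h z - gradient h x‖ := by
  have : fderiv ℝ h z - fderiv ℝ h x
      = InnerProductSpace.toDual ℝ E (gradient h z - gradient h x) := by
    simp [gradient, map_sub]
  rw [this, (InnerProductSpace.toDual ℝ E).norm_map]

/-- descent lemma -/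
lemma descent (h : E → ℝ) (hd : Differentiable ℝ h) (L : ℝ) (hL : 0 ≤ L) (x x' : E)
    (hb : ∀ z, ‖gradient h z - gradient h x‖ ≤ L * ‖z - x‖) :
    |h x' - h x - (inner ℝ (gradient h x) (x' - x) : ℝ)| ≤ L * ‖x' - x‖ * ‖x' - x‖ := by
  set A := fderiv ℝ h x with hA
  set g := fun z => h z - A z with hg
  have hfd : ∀ z : E, HasFDerivAt g (fderiv ℝ h z - A) z := fun z =>
    ((hd z).hasFDerivAt).sub A.hasFDerivAt
  have key : ‖g x' - g x‖ ≤ (L * ‖x' - x‖) * ‖x' - x‖ := by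
    have hconv : Convex ℝ (Metric.closedBall x ‖x' - x‖) := convex_closedBall _ _
    have := hconv.norm_image_sub_le_of_norm_hasFDerivWithin_le
      (f := g) (f' := fun z => fderiv ℝ h z - A) (C := L * ‖x' - x‖) (x := x) (y := x')
      (fun z _ => (hfd z).hasFDerivWithinAt)
      (fun z hz => by
        rw [norm_fderiv_sub_eq]
        calc ‖gradient h z - gradient h x‖ ≤ L * ‖z - x‖ := hb z
        _ ≤ L * ‖x' - x‖ := by
            apply mul_le_mul_of_nonneg_left _ hL
            simpa [dist_eq_norm] using hz)
      (Metric.mem_closedBall_self (norm_nonneg _))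
      (by simp [Metric.mem_closedBall, dist_eq_norm])
    simpa using this
  have hAv : A (x' - x) = (inner ℝ (gradient h x) (x' - x) : ℝ) :=
    fderiv_apply_eq_inner_gradient h x (x' - x)
  have : g x' - g x = h x' - h x - (inner ℝ (gradient h x) (x' - x) : ℝ) := by
    simp only [hg, ← hAv, map_sub]
    ring
  rw [this] at key
  calc |h x' - h x - (inner ℝ (gradient h x) (x' - x) : ℝ)| = ‖_‖ := (Real.norm_eq_abs _).symm
  _ ≤ (L * ‖x' - x‖) * ‖x' - x‖ := key
  _ = L * ‖x' - x‖ * ‖x' - x‖ := by ring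

/-- strong concavity consequence -/
lemma strong_conc (g : E → ℝ) (μ : ℝ) (hμ : 0 < μ)
    (hconc : ∀ y y', g y ≤ g y' + (inner ℝ (gradient g y') (y - y') : ℝ) - μ / 2 * ‖y - y'‖ ^ 2)
    (y y' : E) : μ * ‖y - y'‖ ≤ ‖gradient g y' - gradient g y‖ := by
  rcases eq_or_ne y y' with rfl | hne
  · simp
  · have h1 := hconc y y'
    have h2 := hconc y' y
    have hsum : μ * ‖y - y'‖ ^ 2 ≤ (inner ℝ (gradient g y' - gradient g y) (y - y') : ℝ) := by
      have hy : (inner ℝ (gradient g y) (y' - y) : ℝ) = -(inner ℝ (gradient g y) (y - y') : ℝ) := by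
        rw [← inner_neg_right]; congr 1; abel
      rw [inner_sub_left]
      rw [norm_sub_rev y' y] at h2
      rw [hy] at h2
      nlinarith [h1, h2]
    have hc : (inner ℝ (gradient g y' - gradient g y) (y - y') : ℝ)
        ≤ ‖gradient g y' - gradient g y‖ * ‖y - y'‖ := real_inner_le_norm _ _
    have hpos : 0 < ‖y - y'‖ := by
      rw [norm_pos_iff]; exact sub_ne_zero_of_ne hne
    nlinarith

lemma le_of_sq_add_sq_le (a b c : ℝ) (ha : 0 ≤ a) (hb : 0 ≤ b) (hc : 0 ≤ c)
    (h : a ^ 2 + b ^ 2 ≤ c ^ 2) : a ≤ c ∧ b ≤ c :=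
  ⟨by nlinarith, by nlinarith⟩

open MeasureTheory

set_option maxHeartbeats 2000000 in
/-- under the nonconvex–strongly-concave assumptions, with
`Φ(x) = max_y f(x,y) = f(x, y*(x))`, one has for every `(x,y)`:
`‖∇Φ(x) − ∇_x f(x,y)‖ ≤ κ ‖∇_y f(x,y)‖`, where `κ = ℓ/μ`. -/
theorem zo_vrgda_stmt13 (d1 d2 : ℕ)
    (f : EuclideanSpace ℝ (Fin d1) → EuclideanSpace ℝ (Fin d2) → ℝ)
    (ℓ μ : ℝ) (hμ : 0 < μ) (hμℓ : μ ≤ ℓ)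
    (hdiff : Differentiable ℝ
      (fun p : EuclideanSpace ℝ (Fin d1) × EuclideanSpace ℝ (Fin d2) => f p.1 p.2))
    (hlip : ∀ x x' y y',
      ‖gradient (fun x'' => f x'' y) x - gradient (fun x'' => f x'' y') x'‖ ^ 2 +
          ‖gradient (f x) y - gradient (f x') y'‖ ^ 2 ≤
        ℓ ^ 2 * (‖x - x'‖ ^ 2 + ‖y - y'‖ ^ 2))
    (hconc : ∀ x y y',
      f x y ≤ f x y' + (inner ℝ (gradient (f x) y') (y - y') : ℝ) - μ / 2 * ‖y - y'‖ ^ 2)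
    (ystar : EuclideanSpace ℝ (Fin d1) → EuclideanSpace ℝ (Fin d2))
    (hystar : ∀ x, IsMaxOn (f x) Set.univ (ystar x)) :
    ∀ x y,
      ‖gradient (fun x' => f x' (ystar x')) x - gradient (fun x' => f x' y) x‖ ≤
        ℓ / μ * ‖gradient (f x) y‖ := by
  intro x y
  have hℓ : 0 < ℓ := hμ.trans_le hμℓ
  -- differentiability of partial maps
  have hdx : ∀ y₀, Differentiable ℝ (fun x'' => f x'' y₀) := fun y₀ =>
    hdiff.comp (differentiable_id.prodMk (differentiable_const y₀))
  have hdy : ∀ x₀, Differentiable ℝ (f x₀) := fun x₀ =>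
    hdiff.comp ((differentiable_const x₀).prodMk differentiable_id)
  -- gradient at the maximizer vanishes
  have hgrad0 : ∀ x₀, gradient (f x₀) (ystar x₀) = 0 := by
    intro x₀
    have hmax : IsLocalMax (f x₀) (ystar x₀) :=
      Filter.Eventually.of_forall fun z => hystar x₀ (Set.mem_univ z)
    have := hmax.fderiv_eq_zero
    simp [gradient, this]
  have hB : ∀ x₀ y₁ y₂, μ * ‖y₁ - y₂‖ ≤ ‖gradient (f x₀) y₂ - gradient (f x₀) y₁‖ :=
    fun x₀ => strong_conc (f x₀) μ hμ (hconc x₀)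
  -- Lipschitz bounds extracted from hlip
  have hx1 : ∀ (x₁ x₂ y₁ y₂),
      ‖gradient (fun x'' => f x'' y₁) x₁ - gradient (fun x'' => f x'' y₂) x₂‖
        ≤ ℓ * Real.sqrt (‖x₁ - x₂‖ ^ 2 + ‖y₁ - y₂‖ ^ 2) ∧
      ‖gradient (f x₁) y₁ - gradient (f x₂) y₂‖
        ≤ ℓ * Real.sqrt (‖x₁ - x₂‖ ^ 2 + ‖y₁ - y₂‖ ^ 2) := by
    intro x₁ x₂ y₁ y₂
    have h := hlip x₁ x₂ y₁ y₂
    have hs : (ℓ * Real.sqrt (‖x₁ - x₂‖ ^ 2 + ‖y₁ - y₂‖ ^ 2)) ^ 2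
        = ℓ ^ 2 * (‖x₁ - x₂‖ ^ 2 + ‖y₁ - y₂‖ ^ 2) := by
      rw [mul_pow, Real.sq_sqrt (by positivity)]
    exact le_of_sq_add_sq_le _ _ _ (norm_nonneg _) (norm_nonneg _) (by positivity)
      (by rw [hs]; exact h)
  have hsq0 : ∀ a : ℝ, Real.sqrt (a ^ 2 + 0 ^ 2) = |a| := by
    intro a; rw [← Real.sqrt_sq_eq_abs]; norm_num
  have hxlipx : ∀ (y₀ z x₀), ‖gradient (fun x'' => f x'' y₀) z -
      gradient (fun x'' => f x'' y₀) x₀‖ ≤ ℓ * ‖z - x₀‖ := by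
    intro y₀ z x₀
    have := (hx1 z x₀ y₀ y₀).1
    simpa [hsq0, abs_of_nonneg (norm_nonneg (z - x₀))] using this
  have hxlipy : ∀ (x₀ y₁ y₂), ‖gradient (fun x'' => f x'' y₁) x₀ -
      gradient (fun x'' => f x'' y₂) x₀‖ ≤ ℓ * ‖y₁ - y₂‖ := by
    intro x₀ y₁ y₂
    have := (hx1 x₀ x₀ y₁ y₂).1
    have h0 : Real.sqrt (‖x₀ - x₀‖ ^ 2 + ‖y₁ - y₂‖ ^ 2) = ‖y₁ - y₂‖ := by
      simp [Real.sqrt_sq_eq_abs, abs_of_nonneg (norm_nonneg _)]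
    rwa [h0] at this
  have hylipx : ∀ (y₀ z x₀), ‖gradient (f z) y₀ - gradient (f x₀) y₀‖ ≤ ℓ * ‖z - x₀‖ := by
    intro y₀ z x₀
    have := (hx1 z x₀ y₀ y₀).2
    simpa [hsq0, abs_of_nonneg (norm_nonneg (z - x₀))] using this
  -- ystar is (ℓ/μ)-Lipschitz
  have hystarLip : ∀ x₁ x₂, ‖ystar x₁ - ystar x₂‖ ≤ ℓ / μ * ‖x₁ - x₂‖ := by
    intro x₁ x₂
    have h1 := hB x₁ (ystar x₁) (ystar x₂)
    rw [hgrad0 x₁, sub_zero] at h1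
    have h2 : ‖gradient (f x₁) (ystar x₂)‖ ≤ ℓ * ‖x₁ - x₂‖ := by
      have := hylipx (ystar x₂) x₁ x₂
      rwa [hgrad0 x₂, sub_zero] at this
    rw [div_mul_eq_mul_div, le_div_iff₀ hμ, mul_comm _ μ]
    exact h1.trans h2
  set Φ : EuclideanSpace ℝ (Fin d1) → ℝ := fun x' => f x' (ystar x') with hΦ
  set gx : EuclideanSpace ℝ (Fin d1) := gradient (fun x'' => f x'' (ystar x)) x with hgx
  set C : ℝ := ℓ * (1 + ℓ / μ) with hC
  have hCpos : 0 ≤ C := by positivity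
  -- pointwise quadratic bound
  have keybound : ∀ x', |Φ x' - Φ x - (inner ℝ gx (x' - x) : ℝ)| ≤ C * (‖x' - x‖ * ‖x' - x‖) := by
    intro x'
    have dlow := descent (fun x'' => f x'' (ystar x)) (hdx (ystar x)) ℓ hℓ.le x x'
      (fun z => hxlipx (ystar x) z x)
    have dup := descent (fun x'' => f x'' (ystar x')) (hdx (ystar x')) ℓ hℓ.le x x'
      (fun z => hxlipx (ystar x') z x)
    set g' : EuclideanSpace ℝ (Fin d1) := gradient (fun x'' => f x'' (ystar x')) x with hg'
    have hmax1 : f x' (ystar x) ≤ Φ x' := hystar x' (Set.mem_univ (ystar x))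
    have hmax2 : f x (ystar x') ≤ Φ x := hystar x (Set.mem_univ (ystar x'))
    have hinner : (inner ℝ (g' - gx) (x' - x) : ℝ) ≤ ℓ * (ℓ / μ) * (‖x' - x‖ * ‖x' - x‖) := by
      calc (inner ℝ (g' - gx) (x' - x) : ℝ) ≤ ‖g' - gx‖ * ‖x' - x‖ := real_inner_le_norm _ _
      _ ≤ (ℓ * ‖ystar x' - ystar x‖) * ‖x' - x‖ :=
          mul_le_mul_of_nonneg_right (hxlipy x (ystar x') (ystar x)) (norm_nonneg _)
      _ ≤ (ℓ * (ℓ / μ * ‖x' - x‖)) * ‖x' - x‖ := by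
          apply mul_le_mul_of_nonneg_right _ (norm_nonneg _)
          exact mul_le_mul_of_nonneg_left (hystarLip x' x) hℓ.le
      _ = ℓ * (ℓ / μ) * (‖x' - x‖ * ‖x' - x‖) := by ring
    have hinner2 : (inner ℝ g' (x' - x) : ℝ) = (inner ℝ gx (x' - x) : ℝ) + (inner ℝ (g' - gx) (x' - x) : ℝ) := by
      rw [inner_sub_left]; ring
    have habs1 := abs_le.mp dlow
    have habs2 := abs_le.mp dup
    rw [abs_le]
    constructor
    · -- lower bound
      have : f x' (ystar x) - f x (ystar x) - (inner ℝ gx (x' - x) : ℝ)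
          ≥ -(ℓ * ‖x' - x‖ * ‖x' - x‖) := habs1.1
      have hΦx : Φ x = f x (ystar x) := rfl
      nlinarith [hmax1, norm_nonneg (x' - x), sq_nonneg ‖x' - x‖, mul_nonneg (mul_nonneg hℓ.le (div_nonneg hℓ.le hμ.le)) (mul_nonneg (norm_nonneg (x' - x)) (norm_nonneg (x' - x)))]
    · -- upper bound
      have hup : Φ x' - f x (ystar x') - (inner ℝ g' (x' - x) : ℝ)
          ≤ ℓ * ‖x' - x‖ * ‖x' - x‖ := habs2.2
      nlinarith [hmax2, hinner, hinner2]
  -- gradient of Φ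
  have hfder : HasFDerivAt Φ (InnerProductSpace.toDual ℝ _ gx) x := by
    rw [hasFDerivAt_iff_isLittleO]
    have h1 : (fun x' => Φ x' - Φ x - (InnerProductSpace.toDual ℝ _ gx) (x' - x))
        =O[nhds x] (fun x' => ‖x' - x‖ * ‖x' - x‖) := by
      rw [Asymptotics.isBigO_iff]
      refine ⟨C, Filter.Eventually.of_forall fun x' => ?_⟩
      rw [InnerProductSpace.toDual_apply_apply]
      have := keybound x'
      rw [Real.norm_eq_abs, Real.norm_eq_abs, abs_of_nonneg (by positivity :
        (0:ℝ) ≤ ‖x' - x‖ * ‖x' - x‖)]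
      exact this
    have h2 : (fun x' : EuclideanSpace ℝ (Fin d1) => ‖x' - x‖ * ‖x' - x‖)
        =o[nhds x] (fun x' => x' - x) := by
      have ha : (fun x' : EuclideanSpace ℝ (Fin d1) => ‖x' - x‖)
          =o[nhds x] (fun _ => (1:ℝ)) := by
        rw [Asymptotics.isLittleO_one_iff]
        have : Filter.Tendsto (fun x' : EuclideanSpace ℝ (Fin d1) => ‖x' - x‖)
            (nhds x) (nhds ‖x - x‖) :=
          ((continuous_id.sub continuous_const).norm).tendsto x
        simpa using this
      have hbO : (fun x' : EuclideanSpace ℝ (Fin d1) => ‖x' - x‖)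
          =O[nhds x] (fun x' : EuclideanSpace ℝ (Fin d1) => ‖x' - x‖) :=
        Asymptotics.isBigO_refl _ _
      have h3 := ha.mul_isBigO hbO
      exact Asymptotics.isLittleO_norm_right.mp (by simpa using h3)
    exact h1.trans_isLittleO h2
  have hgradΦ : gradient Φ x = gx := by
    have h1 : HasGradientAt Φ gx x := hasGradientAt_iff_hasFDerivAt.mpr hfder
    exact (hfder.differentiableAt.hasGradientAt).unique h1
  rw [hgradΦ]
  -- final estimate
  have e1 : ‖gx - gradient (fun x' => f x' y) x‖ ≤ ℓ * ‖ystar x - y‖ := by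
    have := hxlipy x (ystar x) y
    simpa [hgx] using this
  have e2 : μ * ‖y - ystar x‖ ≤ ‖gradient (f x) y‖ := by
    have := hB x y (ystar x)
    rwa [hgrad0 x, zero_sub, norm_neg] at this
  have e3 : ‖ystar x - y‖ = ‖y - ystar x‖ := norm_sub_rev _ _
  rw [e3] at e1
  rw [div_mul_eq_mul_div, le_div_iff₀ hμ]
  nlinarith [mul_le_mul_of_nonneg_right e1 hμ.le, mul_le_mul_of_nonneg_left e2 hℓ.le]
end

section
/- Let f : ℝ^{d1} × ℝ^{d2} → ℝ be differentiable with ℓ-Lipschitz gradient and μ-strongly concave in y for every fixed x (0 < μ ≤ ℓ), let κ = ℓ/μ, Φ(x) = max_{y} f(x,y), and L = (κ+1)ℓ. Then for every (x,y) ∈ ℝ^{d1} × ℝ^{d2}, every v ∈ ℝ^{d1}, and every stepsize α > 0, the point x⁺ = x − αv satisfies: Φ(x⁺) ≤ Φ(x) + ακ²‖∇_y f(x,y)‖² + α‖∇_x f(x,y) − v‖² − (α/2 − Lα²/2)‖v‖². -/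
open MeasureTheory


section aux
variable {E : Type*} [NormedAddCommGroup E] [InnerProductSpace ℝ E] [CompleteSpace E]

lemma my_sq_le {a b : ℝ} (hb : 0 ≤ b) (h : a ^ 2 ≤ b ^ 2) (ha : 0 ≤ a) : a ≤ b := by
  nlinarith

lemma my_descent {g : E → ℝ} (hg : Differentiable ℝ g) {ℓ : ℝ}
    (hlip : ∀ a b : E, ‖gradient g a - gradient g b‖ ≤ ℓ * ‖a - b‖)
    (x d : E) :
    g (x + d) ≤ g x + (inner ℝ (gradient g x) d : ℝ) + ℓ / 2 * ‖d‖ ^ 2 := by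
  have hc : ∀ t : ℝ, HasDerivAt (fun t : ℝ => x + t • d) d t := fun t => by
    simpa using ((hasDerivAt_id t).smul_const d).const_add x
  have hφ : ∀ t : ℝ, HasDerivAt (fun t : ℝ => g (x + t • d))
      ((inner ℝ (gradient g (x + t • d)) d : ℝ)) t := by
    intro t
    have h1 : HasFDerivAt g ((InnerProductSpace.toDual ℝ E) (gradient g (x + t • d)))
        (x + t • d) := hasGradientAt_iff_hasFDerivAt.1 (hg _).hasGradientAt
    exact (h1.comp_hasDerivAt t (hc t)).congr_deriv (by rw [InnerProductSpace.toDual_apply_apply])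
  set c : ℝ := (inner ℝ (gradient g x) d : ℝ) with hcdef
  set ψ : ℝ → ℝ := fun t => g (x + t • d) - t * c - ℓ / 2 * t ^ 2 * ‖d‖ ^ 2 with hψ
  have hψd : ∀ t : ℝ, HasDerivAt ψ
      ((inner ℝ (gradient g (x + t • d)) d : ℝ) - c - ℓ * t * ‖d‖ ^ 2) t := by
    intro t
    have h2 : HasDerivAt (fun t : ℝ => t * c) c t := hasDerivAt_mul_const c
    have h3 : HasDerivAt (fun t : ℝ => ℓ / 2 * t ^ 2 * ‖d‖ ^ 2)
        (ℓ * t * ‖d‖ ^ 2) t := by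
      have h4 := ((hasDerivAt_pow 2 t).const_mul (ℓ / 2)).mul_const (‖d‖ ^ 2)
      exact h4.congr_deriv (by rw [show (2:ℕ) - 1 = 1 from rfl]; push_cast; ring)
    exact ((hφ t).sub h2).sub h3
  have hanti : AntitoneOn ψ (Set.Icc (0:ℝ) 1) := by
    apply antitoneOn_of_deriv_nonpos (convex_Icc 0 1)
    · exact fun t _ => (hψd t).differentiableAt.continuousAt.continuousWithinAt
    · exact fun t _ => (hψd t).differentiableAt.differentiableWithinAt
    · intro t ht
      rw [interior_Icc] at ht
      rw [(hψd t).deriv]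
      have h4 : (inner ℝ (gradient g (x + t • d)) d : ℝ) - c =
          (inner ℝ (gradient g (x + t • d) - gradient g x) d : ℝ) := by
        rw [hcdef, inner_sub_left]
      have h5 : (inner ℝ (gradient g (x + t • d) - gradient g x) d : ℝ) ≤ ℓ * t * ‖d‖ ^ 2 :=
        calc (inner ℝ (gradient g (x + t • d) - gradient g x) d : ℝ)
            ≤ ‖gradient g (x + t • d) - gradient g x‖ * ‖d‖ := real_inner_le_norm _ _
          _ ≤ (ℓ * ‖(x + t • d) - x‖) * ‖d‖ :=
              mul_le_mul_of_nonneg_right (hlip _ _) (norm_nonneg d)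
          _ = ℓ * t * ‖d‖ ^ 2 := by
              rw [add_sub_cancel_left, norm_smul, Real.norm_eq_abs, abs_of_pos ht.1]
              ring
      linarith [h4 ▸ h5]
  have hfin := hanti (Set.left_mem_Icc.2 zero_le_one) (Set.right_mem_Icc.2 zero_le_one)
    zero_le_one
  simp only [hψ, one_smul, zero_smul, add_zero, one_pow, mul_one, mul_zero, zero_mul,
    sub_zero, one_mul] at hfin
  linarith

end aux

set_option maxHeartbeats 1000000 in
/-- under the nonconvex–strongly-concave assumptions, with
`Φ(x) = max_y f(x,y) = f(x, y*(x))`, `κ = ℓ/μ` and `L = (κ+1)ℓ`, for every `(x,y)`, every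
`v` and every stepsize `α > 0`, the point `x⁺ = x − αv` satisfies
`Φ(x⁺) ≤ Φ(x) + ακ²‖∇_y f(x,y)‖² + α‖∇_x f(x,y) − v‖² − (α/2 − Lα²/2)‖v‖²`. -/
theorem zo_vrgda_stmt14 (d1 d2 : ℕ)
    (f : EuclideanSpace ℝ (Fin d1) → EuclideanSpace ℝ (Fin d2) → ℝ)
    (ℓ μ : ℝ) (hμ : 0 < μ) (hμℓ : μ ≤ ℓ)
    (hdiff : Differentiable ℝ
      (fun p : EuclideanSpace ℝ (Fin d1) × EuclideanSpace ℝ (Fin d2) => f p.1 p.2))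
    (hlip : ∀ x x' y y',
      ‖gradient (fun x'' => f x'' y) x - gradient (fun x'' => f x'' y') x'‖ ^ 2 +
          ‖gradient (f x) y - gradient (f x') y'‖ ^ 2 ≤
        ℓ ^ 2 * (‖x - x'‖ ^ 2 + ‖y - y'‖ ^ 2))
    (hconc : ∀ x y y',
      f x y ≤ f x y' + (inner ℝ (gradient (f x) y') (y - y') : ℝ) - μ / 2 * ‖y - y'‖ ^ 2)
    (ystar : EuclideanSpace ℝ (Fin d1) → EuclideanSpace ℝ (Fin d2))
    (hystar : ∀ x, IsMaxOn (f x) Set.univ (ystar x)) :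
    ∀ (x : EuclideanSpace ℝ (Fin d1)) (y : EuclideanSpace ℝ (Fin d2))
      (v : EuclideanSpace ℝ (Fin d1)) (α : ℝ), 0 < α →
      f (x - α • v) (ystar (x - α • v)) ≤
        f x (ystar x) + α * (ℓ / μ) ^ 2 * ‖gradient (f x) y‖ ^ 2 +
          α * ‖gradient (fun x' => f x' y) x - v‖ ^ 2 -
          (α / 2 - (ℓ / μ + 1) * ℓ * α ^ 2 / 2) * ‖v‖ ^ 2 := by
  intro x y v α hα
  have hℓ : 0 < ℓ := lt_of_lt_of_le hμ hμℓ
  have hκμ : (ℓ / μ) * μ = ℓ := div_mul_cancel₀ ℓ (ne_of_gt hμ)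
  -- differentiability of the partial maps x ↦ f x y₀
  have hdx : ∀ y0, Differentiable ℝ (fun x' => f x' y0) := fun y0 =>
    hdiff.comp (differentiable_id.prodMk (differentiable_const y0))
  -- the y-gradient vanishes at the maximizer
  have hgy0 : ∀ x0, gradient (f x0) (ystar x0) = 0 := by
    intro x0
    have hmax : IsLocalMax (f x0) (ystar x0) := (hystar x0).isLocalMax Filter.univ_mem
    have h0 : fderiv ℝ (f x0) (ystar x0) = 0 := hmax.fderiv_eq_zero
    show (InnerProductSpace.toDual ℝ _).symm (fderiv ℝ (f x0) (ystar x0)) = 0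
    rw [h0]; simp
  have hxpx : ‖(x - α • v) - x‖ = α * ‖v‖ := by
    rw [sub_sub_cancel_left, norm_neg, norm_smul, Real.norm_eq_abs, abs_of_pos hα]
  -- (6) : ‖h - g‖² ≤ ℓ² n²  (x-gradient Lipschitz in y)
  have h6 : ‖gradient (fun x' => f x' y) x - gradient (fun x' => f x' (ystar x)) x‖ ^ 2
      ≤ ℓ ^ 2 * ‖y - ystar x‖ ^ 2 := by
    have := hlip x x y (ystar x)
    simp only [sub_self, norm_zero] at this
    nlinarith [sq_nonneg ‖gradient (f x) y - gradient (f x) (ystar x)‖]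
  -- (7) : μ ‖y - y*‖ ≤ ‖∇_y f(x,y)‖
  have h7 : μ * ‖y - ystar x‖ ≤ ‖gradient (f x) y‖ := by
    have h1 := hconc x y (ystar x)
    have h2 := hconc x (ystar x) y
    rw [hgy0 x, inner_zero_left] at h1
    have h3 : (inner ℝ (gradient (f x) y) (ystar x - y) : ℝ)
        ≤ ‖gradient (f x) y‖ * ‖y - ystar x‖ := by
      calc (inner ℝ (gradient (f x) y) (ystar x - y) : ℝ)
          ≤ ‖gradient (f x) y‖ * ‖ystar x - y‖ := real_inner_le_norm _ _
        _ = ‖gradient (f x) y‖ * ‖y - ystar x‖ := by rw [norm_sub_rev]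
    rw [norm_sub_rev (ystar x) y] at h2
    have h8 : μ * ‖y - ystar x‖ ^ 2 ≤ ‖gradient (f x) y‖ * ‖y - ystar x‖ := by nlinarith
    rcases eq_or_lt_of_le (norm_nonneg (y - ystar x)) with h9 | h9
    · rw [← h9]; simpa using norm_nonneg (gradient (f x) y)
    · nlinarith
  -- (iii) : ‖∇_y f(x⁺, y*)‖ ≤ ℓ α ‖v‖
  have hiii : ‖gradient (f (x - α • v)) (ystar x)‖ ≤ ℓ * (α * ‖v‖) := by
    have := hlip (x - α • v) x (ystar x) (ystar x)
    rw [hgy0 x, sub_zero, sub_self, norm_zero, hxpx] at this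
    apply my_sq_le (by positivity) _ (norm_nonneg _)
    nlinarith [sq_nonneg
      ‖gradient (fun x'' => f x'' (ystar x)) (x - α • v) - gradient (fun x'' => f x'' (ystar x)) x‖]
  -- Step 1 : concavity in y at x⁺
  have hS1 : f (x - α • v) (ystar (x - α • v)) ≤ f (x - α • v) (ystar x)
      + (ℓ / μ) * ℓ * α ^ 2 / 2 * ‖v‖ ^ 2 := by
    have h1 := hconc (x - α • v) (ystar (x - α • v)) (ystar x)
    have h2 : (inner ℝ (gradient (f (x - α • v)) (ystar x)) (ystar (x - α • v) - ystar x) : ℝ)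
        ≤ ℓ * (α * ‖v‖) * ‖ystar (x - α • v) - ystar x‖ :=
      calc (inner ℝ (gradient (f (x - α • v)) (ystar x)) (ystar (x - α • v) - ystar x) : ℝ)
          ≤ ‖gradient (f (x - α • v)) (ystar x)‖ * ‖ystar (x - α • v) - ystar x‖ :=
            real_inner_le_norm _ _
        _ ≤ ℓ * (α * ‖v‖) * ‖ystar (x - α • v) - ystar x‖ :=
            mul_le_mul_of_nonneg_right hiii (norm_nonneg _)
    have h3 : ℓ * (α * ‖v‖) * ‖ystar (x - α • v) - ystar x‖
        - μ / 2 * ‖ystar (x - α • v) - ystar x‖ ^ 2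
        ≤ (ℓ / μ) * ℓ * α ^ 2 / 2 * ‖v‖ ^ 2 := by
      have hkey : (ℓ / μ) * ℓ * α ^ 2 / 2 * ‖v‖ ^ 2 = ℓ ^ 2 * (α * ‖v‖) ^ 2 / (2 * μ) := by
        field_simp
      rw [hkey, le_div_iff₀ (by positivity : (0:ℝ) < 2 * μ)]
      nlinarith [sq_nonneg (ℓ * (α * ‖v‖) - μ * ‖ystar (x - α • v) - ystar x‖)]
    linarith
  -- Step 2 : descent in x with y fixed at y*
  have hS2 : f (x - α • v) (ystar x) ≤ f x (ystar x)
      - α * (inner ℝ (gradient (fun x' => f x' (ystar x)) x) v : ℝ)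
      + ℓ / 2 * (α * ‖v‖) ^ 2 := by
    have hlipx : ∀ a c : EuclideanSpace ℝ (Fin d1),
        ‖gradient (fun x' => f x' (ystar x)) a - gradient (fun x' => f x' (ystar x)) c‖
          ≤ ℓ * ‖a - c‖ := by
      intro a c
      have := hlip a c (ystar x) (ystar x)
      simp only [sub_self, norm_zero] at this
      apply my_sq_le (by positivity) _ (norm_nonneg _)
      nlinarith [sq_nonneg ‖gradient (f a) (ystar x) - gradient (f c) (ystar x)‖]
    have hd := my_descent (hdx (ystar x)) hlipx x (-(α • v))
    have he1 : x + -(α • v) = x - α • v := (sub_eq_add_neg x (α • v)).symm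
    have he2 : (inner ℝ (gradient (fun x' => f x' (ystar x)) x) (-(α • v)) : ℝ)
        = -(α * (inner ℝ (gradient (fun x' => f x' (ystar x)) x) v : ℝ)) := by
      rw [inner_neg_right, real_inner_smul_right]
    have he3 : ‖-(α • v)‖ = α * ‖v‖ := by
      rw [norm_neg, norm_smul, Real.norm_eq_abs, abs_of_pos hα]
    rw [he1, he2, he3] at hd
    linarith
  -- Step 3 : bound on the inner product
  have hS3 : -(inner ℝ (gradient (fun x' => f x' (ystar x)) x) v : ℝ)
      ≤ -(‖v‖ ^ 2) / 2 + (ℓ / μ) ^ 2 * ‖gradient (f x) y‖ ^ 2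
        + ‖gradient (fun x' => f x' y) x - v‖ ^ 2 := by
    have h4 : ‖gradient (fun x' => f x' (ystar x)) x - v‖ ^ 2
        = ‖gradient (fun x' => f x' (ystar x)) x‖ ^ 2
          - 2 * (inner ℝ (gradient (fun x' => f x' (ystar x)) x) v : ℝ) + ‖v‖ ^ 2 :=
      norm_sub_sq_real _ v
    have h5 : ‖gradient (fun x' => f x' (ystar x)) x - v‖
        ≤ ‖gradient (fun x' => f x' (ystar x)) x - gradient (fun x' => f x' y) x‖
          + ‖gradient (fun x' => f x' y) x - v‖ :=
      norm_sub_le_norm_sub_add_norm_sub _ _ _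
    have h6' : ‖gradient (fun x' => f x' (ystar x)) x - gradient (fun x' => f x' y) x‖ ^ 2
        ≤ ℓ ^ 2 * ‖y - ystar x‖ ^ 2 := by
      rw [norm_sub_rev]; exact h6
    have h7' : ℓ ^ 2 * ‖y - ystar x‖ ^ 2 ≤ (ℓ / μ) ^ 2 * ‖gradient (f x) y‖ ^ 2 := by
      have hμn : (μ * ‖y - ystar x‖) ^ 2 ≤ ‖gradient (f x) y‖ ^ 2 :=
        pow_le_pow_left₀ (by positivity) h7 2
      calc ℓ ^ 2 * ‖y - ystar x‖ ^ 2
          = (ℓ / μ) ^ 2 * (μ * ‖y - ystar x‖) ^ 2 := by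
            field_simp
        _ ≤ (ℓ / μ) ^ 2 * ‖gradient (f x) y‖ ^ 2 := by
            apply mul_le_mul_of_nonneg_left hμn (by positivity)
    nlinarith [sq_nonneg ‖gradient (fun x' => f x' (ystar x)) x‖,
      norm_nonneg (gradient (fun x' => f x' (ystar x)) x - gradient (fun x' => f x' y) x),
      norm_nonneg (gradient (fun x' => f x' y) x - v),
      norm_nonneg (gradient (fun x' => f x' (ystar x)) x - v),
      sq_nonneg (‖gradient (fun x' => f x' (ystar x)) x - gradient (fun x' => f x' y) x‖
        - ‖gradient (fun x' => f x' y) x - v‖)]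
  -- assemble everything
  have hmul := mul_le_mul_of_nonneg_left hS3 hα.le
  nlinarith [hS1, hS2, hmul]
end

section
/- Let f : ℝ^{d1} × ℝ^{d2} → ℝ be differentiable with ℓ-Lipschitz gradient and μ-strongly concave in y for every fixed x (0 < μ ≤ ℓ), let κ = ℓ/μ, Φ(x) = max_{y} f(x,y), let μ₁, μ₂ > 0, and let f_{μ₁}(x,y) = E_ν[f(x+μ₁ν,y)] (ν ~ N(0,I_{d1})) and f_{μ₂}(x,y) = E_ω[f(x,y+μ₂ω)] (ω ~ N(0,I_{d2})) be the partial Gaussian smoothings. Then for every (x,y) and every v ∈ ℝ^{d1}, u ∈ ℝ^{d2}: ‖∇Φ(x)‖² ≤ 6κ²‖∇_y f_{μ₂}(x,y)‖² + 6(‖∇_x f_{μ₁}(x,y) − v‖² + ‖∇_y f_{μ₂}(x,y) − u‖²) + 3‖v‖² + 3π(d1,d2,μ₁,μ₂), where π(d1,d2,μ₁,μ₂) = (μ₂²(κ²+1)/2)ℓ²(d2+3)³ + (μ₁²/2)ℓ²(d1+3)³. -/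
open MeasureTheory ProbabilityTheory

open Real Asymptotics
open scoped ENNReal NNReal

lemma gauss_key (t : ℝ) (ht : 0 ≤ t) : t ≤ 2 * rexp (t / 4) := by
  have h8 : t / 8 + 1 ≤ rexp (t / 8) := Real.add_one_le_exp (t / 8)
  have hsq : rexp (t / 8) ^ 2 = rexp (t / 4) := by
    rw [sq, ← Real.exp_add]; ring_nf
  nlinarith [sq_nonneg (t - 8), sq_nonneg (rexp (t/8))]

lemma gauss_sq_int : Integrable (fun x : ℝ => x ^ 2) (gaussianReal 0 1) ∧
    ∫ x, x ^ 2 ∂(gaussianReal 0 1) ≤ 3 := by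
  have hpdf : ∀ x : ℝ, gaussianPDFReal 0 1 x = (Real.sqrt (2 * π))⁻¹ * rexp (-x ^ 2 / 2) := by
    intro x; simp [gaussianPDFReal]
  have hnn : ∀ x : ℝ, 0 ≤ gaussianPDFReal 0 1 x := fun x => gaussianPDFReal_nonneg 0 1 x
  have hmeas : Measurable (fun x : ℝ => (gaussianPDFReal 0 1 x).toNNReal) :=
    (measurable_gaussianPDFReal 0 1).real_toNNReal
  have hdens : gaussianReal 0 1 = volume.withDensity
      (fun x => (((gaussianPDFReal 0 1 x).toNNReal : ℝ≥0) : ℝ≥0∞)) := by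
    rw [gaussianReal_of_var_ne_zero 0 one_ne_zero]; rfl
  have hbase : ∀ x : ℝ, ((gaussianPDFReal 0 1 x).toNNReal : ℝ≥0) • (x ^ 2) =
      (Real.sqrt (2 * π))⁻¹ * (rexp (-x ^ 2 / 2) * x ^ 2) := by
    intro x
    rw [NNReal.smul_def, smul_eq_mul, Real.coe_toNNReal _ (hnn x), hpdf x]
    ring
  have hint2 : Integrable (fun x : ℝ => rexp (-x ^ 2 / 2) * x ^ 2) := by
    have h := integrable_rpow_mul_exp_neg_mul_sq (b := (1:ℝ)/2) (by norm_num) (s := 2) (by norm_num)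
    refine h.congr (Filter.EventuallyEq.of_eq (funext fun x => ?_))
    rw [show ((2:ℝ)) = ((2:ℕ):ℝ) by norm_num, Real.rpow_natCast]
    ring_nf
  have hint4 : Integrable (fun x : ℝ => rexp (-x ^ 2 / 4)) := by
    have h := integrable_exp_neg_mul_sq (b := (1:ℝ)/4) (by norm_num)
    refine h.congr (Filter.EventuallyEq.of_eq (funext fun x => ?_))
    ring_nf
  -- integrability
  have hInt : Integrable (fun x : ℝ => x ^ 2) (gaussianReal 0 1) := by
    rw [hdens, integrable_withDensity_iff_integrable_smul hmeas]
    refine (hint2.const_mul ((Real.sqrt (2 * π))⁻¹)).congr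
      (Filter.EventuallyEq.of_eq (funext fun x => (hbase x).symm))
  refine ⟨hInt, ?_⟩
  have hIeq : ∫ x, x ^ 2 ∂(gaussianReal 0 1) =
      ∫ x, (Real.sqrt (2 * π))⁻¹ * (rexp (-x ^ 2 / 2) * x ^ 2) := by
    rw [hdens, integral_withDensity_eq_integral_smul hmeas]
    exact integral_congr_ae (Filter.EventuallyEq.of_eq (funext fun x => hbase x))
  rw [hIeq]
  have hmono : ∫ x, (Real.sqrt (2 * π))⁻¹ * (rexp (-x ^ 2 / 2) * x ^ 2) ≤
      ∫ x, (Real.sqrt (2 * π))⁻¹ * (2 * rexp (-x ^ 2 / 4)) := by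
    refine integral_mono (hint2.const_mul _) ((hint4.const_mul 2).const_mul _) fun x => ?_
    have h1 : rexp (-x ^ 2 / 2) * x ^ 2 ≤ 2 * rexp (-x ^ 2 / 4) := by
      have hk := gauss_key (x ^ 2) (sq_nonneg x)
      have e1 : rexp (-x ^ 2 / 2) = rexp (-x ^ 2 / 4) * rexp (-x ^ 2 / 4) := by
        rw [← Real.exp_add]; ring_nf
      have e2 : rexp (-x ^ 2 / 4) * rexp (x ^ 2 / 4) = 1 := by
        rw [← Real.exp_add, show -x ^ 2 / 4 + x ^ 2 / 4 = 0 by ring, Real.exp_zero]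
      have h3 : rexp (-x ^ 2 / 4) * x ^ 2 ≤ 2 := by
        calc rexp (-x ^ 2 / 4) * x ^ 2 ≤ rexp (-x ^ 2 / 4) * (2 * rexp (x ^ 2 / 4)) := by
              exact mul_le_mul_of_nonneg_left hk (Real.exp_nonneg _)
          _ = 2 * (rexp (-x ^ 2 / 4) * rexp (x ^ 2 / 4)) := by ring
          _ = 2 := by rw [e2]; ring
      calc rexp (-x ^ 2 / 2) * x ^ 2 = rexp (-x ^ 2 / 4) * (rexp (-x ^ 2 / 4) * x ^ 2) := by
            rw [e1]; ring
        _ ≤ rexp (-x ^ 2 / 4) * 2 := mul_le_mul_of_nonneg_left h3 (Real.exp_nonneg _)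
        _ = 2 * rexp (-x ^ 2 / 4) := by ring
    exact mul_le_mul_of_nonneg_left h1 (by positivity)
  refine hmono.trans ?_
  have hIval : ∫ x : ℝ, rexp (-x ^ 2 / 4) = Real.sqrt (π / (1/4)) := by
    rw [← integral_gaussian ((1:ℝ)/4)]
    congr 1; funext x; ring_nf
  rw [integral_const_mul, integral_const_mul, hIval]
  have ha : Real.sqrt (2 * π) > 0 := Real.sqrt_pos.2 (by positivity)
  have ha2 : Real.sqrt (2 * π) ^ 2 = 2 * π := Real.sq_sqrt (by positivity)
  have hb2 : Real.sqrt (π / (1/4)) ^ 2 = π / (1/4) := Real.sq_sqrt (by positivity)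
  have hb : Real.sqrt (π / (1/4)) ≥ 0 := Real.sqrt_nonneg _
  have hpi : π ≤ 4 := Real.pi_le_four
  have hpi0 : 0 < π := Real.pi_pos
  rw [inv_mul_le_iff₀ ha]
  nlinarith

/-- The standard Gaussian measure `N(0, I_d)` on `ℝ^d`. -/
noncomputable def stdGaussian (d : ℕ) : Measure (EuclideanSpace ℝ (Fin d)) :=
  (Measure.pi fun _ : Fin d => gaussianReal 0 1).map
    (EuclideanSpace.equiv (Fin d) ℝ).symm


lemma pi_map_eval (d : ℕ) (i : Fin d) :
    (Measure.pi fun _ : Fin d => gaussianReal 0 1).map (Function.eval i) = gaussianReal 0 1 := by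
  refine Measure.ext fun s hs => ?_
  rw [Measure.map_apply (measurable_pi_apply i) hs]
  have hpre : Function.eval i ⁻¹' s =
      Set.pi Set.univ (Function.update (fun _ : Fin d => (Set.univ : Set ℝ)) i s) := by
    ext p
    simp only [Set.mem_preimage, Set.mem_univ_pi, Function.update_apply, Function.eval]
    constructor
    · intro hp j; split_ifs with hj
      · subst hj; exact hp
      · trivial
    · intro hp; have := hp i; simpa using this
  rw [hpre, Measure.pi_pi]
  rw [Finset.prod_eq_single i (fun j _ hj => by simp [Function.update_apply, hj]) (by simp)]
  simp

lemma stdGaussian_isProb (d : ℕ) : IsProbabilityMeasure (stdGaussian d) := by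
  have : Measurable ((EuclideanSpace.equiv (Fin d) ℝ).symm :
      (Fin d → ℝ) → EuclideanSpace ℝ (Fin d)) :=
    (EuclideanSpace.equiv (Fin d) ℝ).symm.continuous.measurable
  exact Measure.isProbabilityMeasure_map this.aemeasurable

lemma stdGaussian_normsq (d : ℕ) :
    Integrable (fun ν : EuclideanSpace ℝ (Fin d) => ‖ν‖ ^ 2) (stdGaussian d) ∧
      ∫ ν, ‖ν‖ ^ 2 ∂(stdGaussian d) ≤ 3 * d := by
  set PI := Measure.pi fun _ : Fin d => gaussianReal 0 1 with hPI
  have hmeas : Measurable ((EuclideanSpace.equiv (Fin d) ℝ).symm :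
      (Fin d → ℝ) → EuclideanSpace ℝ (Fin d)) :=
    (EuclideanSpace.equiv (Fin d) ℝ).symm.continuous.measurable
  have hns : ∀ p : Fin d → ℝ,
      ‖((EuclideanSpace.equiv (Fin d) ℝ).symm p : EuclideanSpace ℝ (Fin d))‖ ^ 2 =
        ∑ i, (p i) ^ 2 := by
    intro p
    rw [EuclideanSpace.norm_eq]
    rw [Real.sq_sqrt (by positivity)]
    congr 1; funext i
    simp [Real.norm_eq_abs, sq_abs]
  have hco : ∀ i : Fin d, Integrable (fun p : Fin d → ℝ => (p i) ^ 2) PI ∧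
      ∫ p, (p i) ^ 2 ∂PI = ∫ x, x ^ 2 ∂(gaussianReal 0 1) := by
    intro i
    have hsm : AEStronglyMeasurable (fun x : ℝ => x ^ 2) (PI.map (Function.eval i)) :=
      (continuous_pow 2).aestronglyMeasurable
    constructor
    · have := (integrable_map_measure hsm (measurable_pi_apply i).aemeasurable).mp
        (by rw [hPI, pi_map_eval d i]; exact gauss_sq_int.1)
      exact this
    · rw [← pi_map_eval d i, integral_map (measurable_pi_apply i).aemeasurable hsm]
  have hsum_int : Integrable (fun p : Fin d → ℝ => ∑ i, (p i) ^ 2) PI :=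
    integrable_finset_sum _ fun i _ => (hco i).1
  have hint : Integrable (fun ν : EuclideanSpace ℝ (Fin d) => ‖ν‖ ^ 2) (stdGaussian d) := by
    rw [_root_.stdGaussian, integrable_map_measure
      (by exact (continuous_norm.pow 2).aestronglyMeasurable) hmeas.aemeasurable]
    exact hsum_int.congr (Filter.EventuallyEq.of_eq (funext fun p => (hns p).symm))
  refine ⟨hint, ?_⟩
  have : ∫ ν, ‖ν‖ ^ 2 ∂(stdGaussian d) = ∫ p, ∑ i, (p i) ^ 2 ∂PI := by
    rw [_root_.stdGaussian, integral_map hmeas.aemeasurable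
      (by exact (continuous_norm.pow 2).aestronglyMeasurable)]
    exact integral_congr_ae (Filter.EventuallyEq.of_eq (funext fun p => hns p))
  rw [this, integral_finset_sum _ fun i _ => (hco i).1]
  calc (∑ i : Fin d, ∫ p, (p i) ^ 2 ∂PI) = ∑ i : Fin d, ∫ x, x ^ 2 ∂(gaussianReal 0 1) := by
        exact Finset.sum_congr rfl fun i _ => (hco i).2
    _ ≤ ∑ i : Fin d, (3:ℝ) := Finset.sum_le_sum fun i _ => gauss_sq_int.2
    _ = 3 * d := by simp [mul_comm]

lemma stdGaussian_norm (d : ℕ) :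
    Integrable (fun ν : EuclideanSpace ℝ (Fin d) => ‖ν‖) (stdGaussian d) ∧
      ∫ ν, ‖ν‖ ∂(stdGaussian d) ≤ (1 + 3 * d) / 2 := by
  have hp := stdGaussian_isProb d
  have h2 := stdGaussian_normsq d
  have hbd : ∀ ν : EuclideanSpace ℝ (Fin d), ‖ν‖ ≤ (1 + ‖ν‖ ^ 2) / 2 := by
    intro ν; nlinarith [sq_nonneg (‖ν‖ - 1)]
  have hintbd : Integrable (fun ν : EuclideanSpace ℝ (Fin d) => (1 + ‖ν‖ ^ 2) / 2)
      (stdGaussian d) := ((integrable_const 1).add h2.1).div_const 2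
  have hint : Integrable (fun ν : EuclideanSpace ℝ (Fin d) => ‖ν‖) (stdGaussian d) := by
    refine hintbd.mono' continuous_norm.aestronglyMeasurable (Filter.Eventually.of_forall
      fun ν => ?_)
    rw [Real.norm_eq_abs, abs_norm]
    exact hbd ν
  refine ⟨hint, ?_⟩
  calc ∫ ν, ‖ν‖ ∂(stdGaussian d) ≤ ∫ ν, (1 + ‖ν‖ ^ 2) / 2 ∂(stdGaussian d) :=
        integral_mono hint hintbd hbd
    _ = (1 + ∫ ν, ‖ν‖ ^ 2 ∂(stdGaussian d)) / 2 := by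
        rw [integral_div, integral_add (integrable_const 1) h2.1, integral_const]
        simp
    _ ≤ (1 + 3 * d) / 2 := by linarith [h2.2]

section Aux

variable {E : Type*} [NormedAddCommGroup E] [InnerProductSpace ℝ E] [CompleteSpace E]

lemma fderiv_eq_toDual (g : E → ℝ) (z : E) :
    fderiv ℝ g z = (InnerProductSpace.toDual ℝ E) (gradient g z) :=
  ((InnerProductSpace.toDual ℝ E).apply_symm_apply (fderiv ℝ g z)).symm

lemma norm_gradient_sub_eq (g : E → ℝ) (z w : E) :
    ‖fderiv ℝ g z - fderiv ℝ g w‖ = ‖gradient g z - gradient g w‖ := by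
  rw [fderiv_eq_toDual g z, fderiv_eq_toDual g w, ← map_sub, LinearIsometryEquiv.norm_map]

lemma quad_bound (g : E → ℝ) (L : ℝ) (hL : 0 ≤ L) (hg : Differentiable ℝ g)
    (hlip : ∀ a b, ‖gradient g a - gradient g b‖ ≤ L * ‖a - b‖) (a b : E) :
    |g b - g a - (inner ℝ (gradient g a) (b - a) : ℝ)| ≤ L * ‖b - a‖ ^ 2 := by
  set A : E →L[ℝ] ℝ :=
    ((InnerProductSpace.toDual ℝ E).toContinuousLinearEquiv :
      E ≃L[ℝ] (StrongDual ℝ E)) (gradient g a) with hA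
  have hAapp : ∀ w : E, A w = (inner ℝ (gradient g a) w : ℝ) := fun w => rfl
  have hfd : ∀ z ∈ Metric.closedBall a ‖b - a‖,
      HasFDerivWithinAt (fun w => g w - A w) (fderiv ℝ g z - A) (Metric.closedBall a ‖b - a‖) z :=
    fun z _ => ((hg z).hasFDerivAt.sub A.hasFDerivAt).hasFDerivWithinAt
  have hbound : ∀ z ∈ Metric.closedBall a ‖b - a‖, ‖fderiv ℝ g z - A‖ ≤ L * ‖b - a‖ := by
    intro z hz
    have h1 : ‖fderiv ℝ g z - A‖ = ‖gradient g z - gradient g a‖ := by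
      have : A = fderiv ℝ g a := by rw [hA, fderiv_eq_toDual g a]; rfl
      rw [this, norm_gradient_sub_eq]
    rw [h1]
    refine (hlip z a).trans ?_
    have : ‖z - a‖ ≤ ‖b - a‖ := by
      rw [← dist_eq_norm]; exact Metric.mem_closedBall.mp hz
    exact mul_le_mul_of_nonneg_left this hL
  have key := Convex.norm_image_sub_le_of_norm_hasFDerivWithin_le hfd hbound
    (convex_closedBall a ‖b - a‖) (Metric.mem_closedBall_self (norm_nonneg _))
    (by rw [Metric.mem_closedBall, dist_eq_norm])
  have he : g b - A b - (g a - A a) = g b - g a - (inner ℝ (gradient g a) (b - a) : ℝ) := by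
    rw [hAapp, hAapp, inner_sub_right]; ring
  calc |g b - g a - (inner ℝ (gradient g a) (b - a) : ℝ)| = ‖(g b - A b) - (g a - A a)‖ := by
        rw [he]; rfl
    _ ≤ L * ‖b - a‖ * ‖b - a‖ := key
    _ = L * ‖b - a‖ ^ 2 := by ring

end Aux

lemma smoothing_grad_close (d : ℕ) (g : EuclideanSpace ℝ (Fin d) → ℝ) (L m : ℝ)
    (hL : 0 ≤ L) (hm : 0 < m) (hg : Differentiable ℝ g)
    (hlip : ∀ a b, ‖gradient g a - gradient g b‖ ≤ L * ‖a - b‖)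
    (x : EuclideanSpace ℝ (Fin d)) :
    ‖gradient (fun x' => ∫ ν, g (x' + m • ν) ∂(stdGaussian d)) x - gradient g x‖ ≤
      L * m * ((1 + 3 * d) / 2) := by
  haveI := stdGaussian_isProb d
  set γ := stdGaussian d with hγ
  have hnorm1 := stdGaussian_norm d
  have hnorm2 := stdGaussian_normsq d
  have hgc : Continuous g := hg.continuous
  have hgradlip : LipschitzWith L.toNNReal (gradient g) := by
    refine LipschitzWith.of_dist_le_mul fun p q => ?_
    rw [dist_eq_norm, dist_eq_norm, Real.coe_toNNReal L hL]
    exact hlip p q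
  have hgradcont : Continuous (gradient g) := hgradlip.continuous
  have htrans : ∀ x' : EuclideanSpace ℝ (Fin d),
      Continuous (fun ν : EuclideanSpace ℝ (Fin d) => x' + m • ν) :=
    fun x' => continuous_const.add (continuous_id.const_smul m)
  -- bound for the derivative
  set B : EuclideanSpace ℝ (Fin d) → ℝ := fun ν => (‖gradient g x‖ + L) + L * m * ‖ν‖ with hB
  have hBint : Integrable B γ := (integrable_const _).add (hnorm1.1.const_mul (L * m))
  have hnsmul : ∀ ν : EuclideanSpace ℝ (Fin d), ‖m • ν‖ = m * ‖ν‖ := by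
    intro ν; rw [norm_smul, Real.norm_eq_abs, abs_of_pos hm]
  have hgradbd : ∀ ν : EuclideanSpace ℝ (Fin d), ∀ x' ∈ Metric.ball x 1,
      ‖gradient g (x' + m • ν)‖ ≤ B ν := by
    intro ν x' hx'
    have h1 : ‖gradient g (x' + m • ν) - gradient g x‖ ≤ L * ‖x' + m • ν - x‖ := hlip _ _
    have h2 : ‖x' + m • ν - x‖ ≤ ‖x' - x‖ + m * ‖ν‖ := by
      calc ‖x' + m • ν - x‖ = ‖(x' - x) + m • ν‖ := by
            rw [show x' + m • ν - x = x' - x + m • ν from by abel]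
        _ ≤ ‖x' - x‖ + ‖m • ν‖ := norm_add_le _ _
        _ = ‖x' - x‖ + m * ‖ν‖ := by rw [hnsmul]
    have h3 : ‖x' - x‖ < 1 := by
      rw [← dist_eq_norm]; exact Metric.mem_ball.mp hx'
    have h4 : ‖gradient g (x' + m • ν)‖ ≤ ‖gradient g x‖ + L * (‖x' - x‖ + m * ‖ν‖) := by
      calc ‖gradient g (x' + m • ν)‖
          ≤ ‖gradient g x‖ + ‖gradient g (x' + m • ν) - gradient g x‖ := by
            have := norm_add_le (gradient g x) (gradient g (x' + m • ν) - gradient g x)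
            simpa using this
        _ ≤ ‖gradient g x‖ + L * ‖x' + m • ν - x‖ := by linarith
        _ ≤ ‖gradient g x‖ + L * (‖x' - x‖ + m * ‖ν‖) := by
            have := mul_le_mul_of_nonneg_left h2 hL; linarith
    rw [hB]
    have : L * ‖x' - x‖ ≤ L := by
      have := mul_le_mul_of_nonneg_left h3.le hL; simpa using this
    simp only []
    nlinarith [norm_nonneg ν, mul_nonneg hL hm.le]
  -- differentiation under the integral sign
  have hF_int : Integrable (fun ν => g (x + m • ν)) γ := by
    have hbd : ∀ ν : EuclideanSpace ℝ (Fin d), ‖g (x + m • ν)‖ ≤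
        (|g x| + ‖gradient g x‖ * m * ‖ν‖) + L * m ^ 2 * ‖ν‖ ^ 2 := by
      intro ν
      have hq := quad_bound g L hL hg hlip x (x + m • ν)
      have he : x + m • ν - x = m • ν := by abel
      rw [he] at hq
      have hcs : |(inner ℝ (gradient g x) (m • ν) : ℝ)| ≤ ‖gradient g x‖ * (m * ‖ν‖) := by
        calc |(inner ℝ (gradient g x) (m • ν) : ℝ)| ≤ ‖gradient g x‖ * ‖m • ν‖ :=
              abs_real_inner_le_norm _ _
          _ = ‖gradient g x‖ * (m * ‖ν‖) := by rw [hnsmul]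
      rw [Real.norm_eq_abs]
      have h1 : |g (x + m • ν)| ≤ |g x| + |(inner ℝ (gradient g x) (m • ν) : ℝ)|
          + L * ‖m • ν‖ ^ 2 := by
        have hdecomp : g (x + m • ν) =
            (g (x + m • ν) - g x - (inner ℝ (gradient g x) (m • ν) : ℝ)) + g x +
              (inner ℝ (gradient g x) (m • ν) : ℝ) := by ring
        calc |g (x + m • ν)| = |(g (x + m • ν) - g x - (inner ℝ (gradient g x) (m • ν) : ℝ)) + g x +
              (inner ℝ (gradient g x) (m • ν) : ℝ)| := by rw [← hdecomp]
          _ ≤ |(g (x + m • ν) - g x - (inner ℝ (gradient g x) (m • ν) : ℝ)) + g x| +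
              |(inner ℝ (gradient g x) (m • ν) : ℝ)| := abs_add_le _ _
          _ ≤ (|g (x + m • ν) - g x - (inner ℝ (gradient g x) (m • ν) : ℝ)| + |g x|) +
              |(inner ℝ (gradient g x) (m • ν) : ℝ)| := by
                have := abs_add_le (g (x + m • ν) - g x - (inner ℝ (gradient g x) (m • ν) : ℝ)) (g x)
                linarith
          _ ≤ |g x| + |(inner ℝ (gradient g x) (m • ν) : ℝ)| + L * ‖m • ν‖ ^ 2 := by
                linarith [hq]
      have h3 : ‖m • ν‖ ^ 2 = m ^ 2 * ‖ν‖ ^ 2 := by rw [hnsmul]; ring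
      rw [h3] at h1
      nlinarith [hcs]
    have i1 : Integrable (fun ν : EuclideanSpace ℝ (Fin d) =>
        ‖gradient g x‖ * m * ‖ν‖) γ := by
      have := hnorm1.1.const_mul (‖gradient g x‖ * m)
      simpa [mul_assoc] using this
    have i2 : Integrable (fun ν : EuclideanSpace ℝ (Fin d) =>
        L * m ^ 2 * ‖ν‖ ^ 2) γ := hnorm2.1.const_mul _
    have i3 : Integrable (fun ν : EuclideanSpace ℝ (Fin d) =>
        (|g x| + ‖gradient g x‖ * m * ‖ν‖) + L * m ^ 2 * ‖ν‖ ^ 2) γ :=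
      ((integrable_const _).add i1).add i2
    exact Integrable.mono' i3 ((hgc.comp (htrans x)).aestronglyMeasurable)
      (Filter.Eventually.of_forall hbd)
  have hfd_cont : Continuous (fun ν : EuclideanSpace ℝ (Fin d) => fderiv ℝ g (x + m • ν)) := by
    have he : (fun ν : EuclideanSpace ℝ (Fin d) => fderiv ℝ g (x + m • ν)) =
        fun ν => (InnerProductSpace.toDual ℝ _) (gradient g (x + m • ν)) :=
      funext fun ν => fderiv_eq_toDual g _
    rw [he]
    exact (InnerProductSpace.toDual ℝ _).continuous.comp (hgradcont.comp (htrans x))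
  have hasF : HasFDerivAt (fun x' => ∫ ν, g (x' + m • ν) ∂γ)
      (∫ ν, fderiv ℝ g (x + m • ν) ∂γ) x := by
    refine hasFDerivAt_integral_of_dominated_of_fderiv_le (hs := Metric.ball_mem_nhds x one_pos)
      (bound := B) (F' := fun x' ν => fderiv ℝ g (x' + m • ν)) ?_ hF_int ?_ ?_ hBint ?_
    · exact Filter.Eventually.of_forall fun x' =>
        (hgc.comp (htrans x')).aestronglyMeasurable
    · exact hfd_cont.aestronglyMeasurable
    · refine Filter.Eventually.of_forall fun ν => fun x' hx' => ?_
      have := hgradbd ν x' hx'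
      rw [show ‖fderiv ℝ g (x' + m • ν)‖ = ‖gradient g (x' + m • ν)‖ by
        rw [fderiv_eq_toDual g _, LinearIsometryEquiv.norm_map]]
      exact this
    · refine Filter.Eventually.of_forall fun ν => fun x' _ => ?_
      have ht : HasFDerivAt (fun x'' : EuclideanSpace ℝ (Fin d) => x'' + m • ν)
          (ContinuousLinearMap.id ℝ _) x' := (hasFDerivAt_id x').add_const _
      have hc := ((hg (x' + m • ν)).hasFDerivAt.comp x' ht)
      rw [ContinuousLinearMap.comp_id] at hc
      exact hc
  have hIgrad : Integrable (fun ν => gradient g (x + m • ν)) γ := by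
    refine Integrable.mono' hBint
      ((hgradcont.comp (htrans x)).aestronglyMeasurable)
      (Filter.Eventually.of_forall fun ν => hgradbd ν x (Metric.mem_ball_self one_pos))
  have hcomm : ∫ ν, fderiv ℝ g (x + m • ν) ∂γ =
      (InnerProductSpace.toDual ℝ _) (∫ ν, gradient g (x + m • ν) ∂γ) := by
    have hli := (InnerProductSpace.toDual ℝ
        (EuclideanSpace ℝ (Fin d))).toLinearIsometry.integral_comp_comm
      (μ := γ) (fun ν => gradient g (x + m • ν))
    simp only [LinearIsometryEquiv.coe_toLinearIsometry] at hli
    calc ∫ ν, fderiv ℝ g (x + m • ν) ∂γ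
        = ∫ ν, (InnerProductSpace.toDual ℝ _) (gradient g (x + m • ν)) ∂γ := by
          exact integral_congr_ae (Filter.EventuallyEq.of_eq
            (funext fun ν => fderiv_eq_toDual g _))
      _ = (InnerProductSpace.toDual ℝ _) (∫ ν, gradient g (x + m • ν) ∂γ) := hli
  have hgradval : gradient (fun x' => ∫ ν, g (x' + m • ν) ∂γ) x =
      ∫ ν, gradient g (x + m • ν) ∂γ := by
    rw [hcomm] at hasF
    exact hasF.hasGradientAt.gradient.trans
      ((InnerProductSpace.toDual ℝ _).symm_apply_apply _)
  rw [hgradval]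
  have hsub : ∫ ν, gradient g (x + m • ν) ∂γ - gradient g x =
      ∫ ν, (gradient g (x + m • ν) - gradient g x) ∂γ := by
    rw [integral_sub hIgrad (integrable_const _), integral_const]
    simp
  rw [hsub]
  calc ‖∫ ν, (gradient g (x + m • ν) - gradient g x) ∂γ‖
      ≤ ∫ ν, ‖gradient g (x + m • ν) - gradient g x‖ ∂γ := norm_integral_le_integral_norm _
    _ ≤ ∫ ν, L * m * ‖ν‖ ∂γ := by
        refine integral_mono ((hIgrad.sub (integrable_const _)).norm)
          (hnorm1.1.const_mul _) fun ν => ?_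
        refine (hlip _ _).trans ?_
        rw [show x + m • ν - x = m • ν by abel, hnsmul, ← mul_assoc]
    _ = L * m * ∫ ν, ‖ν‖ ∂γ := integral_const_mul _ _
    _ ≤ L * m * ((1 + 3 * d) / 2) :=
        mul_le_mul_of_nonneg_left hnorm1.2 (mul_nonneg hL hm.le)

set_option maxHeartbeats 2000000 in
/-- under the nonconvex–strongly-concave assumptions, with
`Φ(x) = max_y f(x,y) = f(x, y*(x))`, `κ = ℓ/μ`, and partial Gaussian smoothings
`f_{μ₁}(x,y) = E_ν[f(x+μ₁ν,y)]`, `f_{μ₂}(x,y) = E_ω[f(x,y+μ₂ω)]`, for every `(x,y)` and every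
`v, u`:
`‖∇Φ(x)‖² ≤ 6κ²‖∇_y f_{μ₂}(x,y)‖² + 6(‖∇_x f_{μ₁}(x,y)−v‖² + ‖∇_y f_{μ₂}(x,y)−u‖²)
  + 3‖v‖² + 3π(d1,d2,μ₁,μ₂)`,
where `π(d1,d2,μ₁,μ₂) = (μ₂²(κ²+1)/2)ℓ²(d2+3)³ + (μ₁²/2)ℓ²(d1+3)³`. -/
theorem zo_vrgda_stmt15 (d1 d2 : ℕ)
    (f : EuclideanSpace ℝ (Fin d1) → EuclideanSpace ℝ (Fin d2) → ℝ)
    (ℓ μ μ₁ μ₂ : ℝ) (hμ : 0 < μ) (hμℓ : μ ≤ ℓ) (hμ₁ : 0 < μ₁) (hμ₂ : 0 < μ₂)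
    (hdiff : Differentiable ℝ
      (fun p : EuclideanSpace ℝ (Fin d1) × EuclideanSpace ℝ (Fin d2) => f p.1 p.2))
    (hlip : ∀ x x' y y',
      ‖gradient (fun x'' => f x'' y) x - gradient (fun x'' => f x'' y') x'‖ ^ 2 +
          ‖gradient (f x) y - gradient (f x') y'‖ ^ 2 ≤
        ℓ ^ 2 * (‖x - x'‖ ^ 2 + ‖y - y'‖ ^ 2))
    (hconc : ∀ x y y',
      f x y ≤ f x y' + (inner ℝ (gradient (f x) y') (y - y') : ℝ) - μ / 2 * ‖y - y'‖ ^ 2)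
    (ystar : EuclideanSpace ℝ (Fin d1) → EuclideanSpace ℝ (Fin d2))
    (hystar : ∀ x, IsMaxOn (f x) Set.univ (ystar x)) :
    ∀ (x : EuclideanSpace ℝ (Fin d1)) (y : EuclideanSpace ℝ (Fin d2))
      (v : EuclideanSpace ℝ (Fin d1)) (u : EuclideanSpace ℝ (Fin d2)),
      ‖gradient (fun x' => f x' (ystar x')) x‖ ^ 2 ≤
        6 * (ℓ / μ) ^ 2 *
            ‖gradient (fun y' => ∫ ω, f x (y' + μ₂ • ω) ∂(stdGaussian d2)) y‖ ^ 2 +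
          6 * (‖gradient (fun x' => ∫ ν, f (x' + μ₁ • ν) y ∂(stdGaussian d1)) x - v‖ ^ 2 +
              ‖gradient (fun y' => ∫ ω, f x (y' + μ₂ • ω) ∂(stdGaussian d2)) y - u‖ ^ 2) +
          3 * ‖v‖ ^ 2 +
          3 * (μ₂ ^ 2 * ((ℓ / μ) ^ 2 + 1) / 2 * ℓ ^ 2 * ((d2 : ℝ) + 3) ^ 3 +
              μ₁ ^ 2 / 2 * ℓ ^ 2 * ((d1 : ℝ) + 3) ^ 3) := by
  intro x y v u
  have hℓ0 : 0 < ℓ := hμ.trans_le hμℓ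
  have hμ0 : (μ:ℝ) ≠ 0 := ne_of_gt hμ
  -- differentiability of partial maps
  have hdiffx : ∀ b, Differentiable ℝ (fun a => f a b) := by
    intro b a
    exact (hdiff (a, b)).comp a ((differentiableAt_id.prodMk (differentiableAt_const b)) :
      DifferentiableAt ℝ (fun a' : EuclideanSpace ℝ (Fin d1) => (a', b)) a)
  have hdiffy : ∀ a, Differentiable ℝ (f a) := by
    intro a b
    exact (hdiff (a, b)).comp b ((differentiableAt_const a).prodMk differentiableAt_id)
  -- helper: from squares to norms
  have root : ∀ A B : ℝ, 0 ≤ A → 0 ≤ B → A ^ 2 ≤ B ^ 2 → A ≤ B := by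
    intro A B hA hB h; nlinarith
  -- Lipschitz facts for partial gradients
  have hX : ∀ a a' b, ‖gradient (fun x'' => f x'' b) a - gradient (fun x'' => f x'' b) a'‖ ≤ ℓ * ‖a - a'‖ := by
    intro a a' b
    have h := hlip a a' b b
    refine root _ _ (norm_nonneg _) (by positivity) ?_
    have h2 : ‖b - b‖ = 0 := by simp
    rw [h2] at h
    nlinarith [sq_nonneg (‖gradient (f a) b - gradient (f a') b‖)]
  have hXy : ∀ a b b', ‖gradient (fun x'' => f x'' b) a - gradient (fun x'' => f x'' b') a‖ ≤ ℓ * ‖b - b'‖ := by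
    intro a b b'
    have h := hlip a a b b'
    refine root _ _ (norm_nonneg _) (by positivity) ?_
    have h2 : ‖a - a‖ = 0 := by simp
    rw [h2] at h
    nlinarith [sq_nonneg (‖gradient (f a) b - gradient (f a) b'‖)]
  have hY : ∀ a a' b, ‖gradient (f a) b - gradient (f a') b‖ ≤ ℓ * ‖a - a'‖ := by
    intro a a' b
    have h := hlip a a' b b
    refine root _ _ (norm_nonneg _) (by positivity) ?_
    have h2 : ‖b - b‖ = 0 := by simp
    rw [h2] at h
    nlinarith [sq_nonneg (‖gradient (fun x'' => f x'' b) a - gradient (fun x'' => f x'' b) a'‖)]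
  have hYy : ∀ a b b', ‖gradient (f a) b - gradient (f a) b'‖ ≤ ℓ * ‖b - b'‖ := by
    intro a b b'
    have h := hlip a a b b'
    refine root _ _ (norm_nonneg _) (by positivity) ?_
    have h2 : ‖a - a‖ = 0 := by simp
    rw [h2] at h
    nlinarith [sq_nonneg (‖gradient (fun x'' => f x'' b) a - gradient (fun x'' => f x'' b') a‖)]
  -- gradient vanishes at the maximizer
  have hmax0 : ∀ a, gradient (f a) (ystar a) = 0 := by
    intro a
    have hlm : IsLocalMax (f a) (ystar a) := (hystar a).isLocalMax Filter.univ_mem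
    have hfd : fderiv ℝ (f a) (ystar a) = 0 := hlm.fderiv_eq_zero
    show gradient (f a) (ystar a) = 0
    have : gradient (f a) (ystar a) =
        (InnerProductSpace.toDual ℝ _).symm (fderiv ℝ (f a) (ystar a)) := rfl
    rw [this, hfd, map_zero]
  -- strong concavity: distance to maximizer controlled by gradient
  have hsc : ∀ a b, μ * ‖b - ystar a‖ ≤ ‖gradient (f a) b‖ := by
    intro a b
    by_cases h0 : b = ystar a
    · simp [h0, norm_nonneg]
    · have hn : 0 < ‖b - ystar a‖ := by
        rw [norm_pos_iff, sub_ne_zero]; exact h0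
      have h1 := hconc a (ystar a) b
      have h2 := hconc a b (ystar a)
      rw [hmax0 a, inner_zero_left] at h2
      have hip : (inner ℝ (gradient (f a) b) (ystar a - b) : ℝ) ≤ ‖gradient (f a) b‖ * ‖ystar a - b‖ :=
        real_inner_le_norm _ _
      have hrev : ‖ystar a - b‖ = ‖b - ystar a‖ := norm_sub_rev _ _
      rw [hrev] at hip h1
      refine (mul_le_mul_iff_of_pos_right hn).mp ?_
      nlinarith
  -- the maximizer is Lipschitz
  have hstar_lip : ∀ a a', ‖ystar a - ystar a'‖ ≤ ℓ / μ * ‖a - a'‖ := by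
    intro a a'
    have h1 := hsc a (ystar a')
    have h2 : ‖gradient (f a) (ystar a')‖ = ‖gradient (f a) (ystar a') - gradient (f a') (ystar a')‖ := by
      rw [hmax0 a', sub_zero]
    have h3 := hY a a' (ystar a')
    rw [h2] at h1
    have h4 : μ * ‖ystar a' - ystar a‖ ≤ ℓ * ‖a - a'‖ := h1.trans h3
    rw [norm_sub_rev] at h4
    rw [div_mul_eq_mul_div, le_div_iff₀ hμ]
    nlinarith
  -- Danskin: gradient of x ↦ f x (ystar x)
  set G : EuclideanSpace ℝ (Fin d1) := gradient (fun x'' => f x'' (ystar x)) x with hG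
  set C : ℝ := ℓ + ℓ * (ℓ / μ) with hC
  have hCpos : 0 < C := by have : 0 < ℓ / μ := div_pos hℓ0 hμ; positivity
  have herr : ∀ x', |f x' (ystar x') - f x (ystar x) - (inner ℝ G (x' - x) : ℝ)| ≤
      C * ‖x' - x‖ ^ 2 := by
    intro x'
    have hA := quad_bound (fun z => f z (ystar x)) ℓ hℓ0.le (hdiffx (ystar x))
      (fun a b => hX a b (ystar x)) x x'
    have hB := quad_bound (fun z => f z (ystar x')) ℓ hℓ0.le (hdiffx (ystar x'))
      (fun a b => hX a b (ystar x')) x x'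
    have hmax1 : f x' (ystar x) ≤ f x' (ystar x') := hystar x' (Set.mem_univ _)
    have hmax2 : f x (ystar x') ≤ f x (ystar x) := hystar x (Set.mem_univ _)
    have hcross : (inner ℝ (gradient (fun x'' => f x'' (ystar x')) x) (x' - x) : ℝ) ≤ (inner ℝ G (x' - x) : ℝ)
        + ℓ * (ℓ / μ) * ‖x' - x‖ ^ 2 := by
      have hsplit : (inner ℝ (gradient (fun x'' => f x'' (ystar x')) x) (x' - x) : ℝ) = (inner ℝ G (x' - x) : ℝ)
          + (inner ℝ (gradient (fun x'' => f x'' (ystar x')) x - G) (x' - x) : ℝ) := by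
        rw [inner_sub_left]; ring
      have hb1 : (inner ℝ (gradient (fun x'' => f x'' (ystar x')) x - G) (x' - x) : ℝ) ≤
          ‖gradient (fun x'' => f x'' (ystar x')) x - G‖ * ‖x' - x‖ := real_inner_le_norm _ _
      have hb2 : ‖gradient (fun x'' => f x'' (ystar x')) x - G‖ ≤ ℓ * ‖ystar x' - ystar x‖ := hXy x (ystar x') (ystar x)
      have hb3 : ‖ystar x' - ystar x‖ ≤ ℓ / μ * ‖x' - x‖ := hstar_lip x' x
      have hb4 : ‖gradient (fun x'' => f x'' (ystar x')) x - G‖ * ‖x' - x‖ ≤ ℓ * (ℓ / μ) * ‖x' - x‖ ^ 2 := by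
        have : ‖gradient (fun x'' => f x'' (ystar x')) x - G‖ ≤ ℓ * (ℓ / μ * ‖x' - x‖) :=
          hb2.trans (mul_le_mul_of_nonneg_left hb3 hℓ0.le)
        nlinarith [norm_nonneg (x' - x), norm_nonneg (gradient (fun x'' => f x'' (ystar x')) x - G)]
      linarith
    have hAabs := abs_le.mp hA
    have hBabs := abs_le.mp hB
    rw [abs_le]
    constructor
    · -- lower bound
      have : x' - x = x' - x := rfl
      have hlo : f x (ystar x) + (inner ℝ G (x' - x) : ℝ) - ℓ * ‖x' - x‖ ^ 2 ≤ f x' (ystar x) := by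
        have := hAabs.1
        linarith
      have hκ : 0 ≤ ℓ * (ℓ / μ) * ‖x' - x‖ ^ 2 := by positivity
      rw [hC]
      nlinarith [hmax1, hlo]
    · -- upper bound
      have hup : f x' (ystar x') ≤ f x (ystar x') + (inner ℝ (gradient (fun x'' => f x'' (ystar x')) x) (x' - x) : ℝ)
          + ℓ * ‖x' - x‖ ^ 2 := by
        have := hBabs.2
        linarith
      rw [hC]
      nlinarith [hmax2, hcross]
  have hPhi : HasGradientAt (fun x' => f x' (ystar x')) G x := by
    rw [hasGradientAt_iff_hasFDerivAt]
    refine hasFDerivAt_iff_isLittleO.2 ?_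
    have hlo : (fun x' => f x' (ystar x') - f x (ystar x) - (inner ℝ G (x' - x) : ℝ))
        =o[nhds x] fun x' => x' - x := by
      rw [Asymptotics.isLittleO_iff]
      intro c hc
      rw [Metric.eventually_nhds_iff]
      refine ⟨c / C, by positivity, fun x' hx' => ?_⟩
      rw [dist_eq_norm] at hx'
      have h1 := herr x'
      have h2 : C * ‖x' - x‖ ≤ c := by
        have := (lt_div_iff₀ hCpos).mp hx'
        nlinarith
      rw [Real.norm_eq_abs]
      calc |f x' (ystar x') - f x (ystar x) - (inner ℝ G (x' - x) : ℝ)| ≤ C * ‖x' - x‖ ^ 2 := h1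
        _ = (C * ‖x' - x‖) * ‖x' - x‖ := by ring
        _ ≤ c * ‖x' - x‖ := mul_le_mul_of_nonneg_right h2 (norm_nonneg _)
    simpa only [InnerProductSpace.toDual_apply_apply] using hlo
  have hPhival : gradient (fun x' => f x' (ystar x')) x = G := hPhi.gradient
  -- smoothing bounds
  set E1 : ℝ := ℓ * μ₁ * ((1 + 3 * d1) / 2) with hE1
  set E2 : ℝ := ℓ * μ₂ * ((1 + 3 * d2) / 2) with hE2
  have hsm1 : ‖gradient (fun x' => ∫ ν, f (x' + μ₁ • ν) y ∂(stdGaussian d1)) x - gradient (fun x'' => f x'' y) x‖ ≤ E1 :=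
    smoothing_grad_close d1 (fun z => f z y) ℓ μ₁ hℓ0.le hμ₁ (hdiffx y)
      (fun a b => hX a b y) x
  have hsm2 : ‖gradient (fun y' => ∫ ω, f x (y' + μ₂ • ω) ∂(stdGaussian d2)) y - gradient (f x) y‖ ≤ E2 :=
    smoothing_grad_close d2 (f x) ℓ μ₂ hℓ0.le hμ₂ (hdiffy x)
      (fun a b => hYy x a b) y
  set gx : EuclideanSpace ℝ (Fin d1) :=
    gradient (fun x' => ∫ ν, f (x' + μ₁ • ν) y ∂(stdGaussian d1)) x with hgx
  set gy : EuclideanSpace ℝ (Fin d2) :=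
    gradient (fun y' => ∫ ω, f x (y' + μ₂ • ω) ∂(stdGaussian d2)) y with hgy
  rw [hPhival]
  set K : ℝ := ℓ / μ with hK
  have hK0 : 0 < K := div_pos hℓ0 hμ
  set A : ℝ := ‖gy‖ with hA
  set B : ℝ := ‖gx - v‖ with hB
  set V : ℝ := ‖v‖ with hV
  -- T1 : ‖G - gradient (fun x'' => f x'' y) x‖ ≤ K * (A + E2)
  have hT1 : ‖G - gradient (fun x'' => f x'' y) x‖ ≤ K * (A + E2) := by
    have h1 : ‖G - gradient (fun x'' => f x'' y) x‖ ≤ ℓ * ‖ystar x - y‖ := hXy x (ystar x) y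
    have h2 : μ * ‖y - ystar x‖ ≤ ‖gradient (f x) y‖ := hsc x y
    have h3 : ‖gradient (f x) y‖ ≤ A + E2 := by
      calc ‖gradient (f x) y‖ = ‖gy - (gy - gradient (f x) y)‖ := by rw [sub_sub_cancel]
        _ ≤ ‖gy‖ + ‖gy - gradient (f x) y‖ := norm_sub_le _ _
        _ ≤ A + E2 := by rw [hA]; linarith [hsm2]
    have h4 : ℓ * ‖ystar x - y‖ = K * (μ * ‖y - ystar x‖) := by
      rw [norm_sub_rev, hK]; field_simp
    calc ‖G - gradient (fun x'' => f x'' y) x‖ ≤ ℓ * ‖ystar x - y‖ := h1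
      _ = K * (μ * ‖y - ystar x‖) := h4
      _ ≤ K * ‖gradient (f x) y‖ := mul_le_mul_of_nonneg_left h2 hK0.le
      _ ≤ K * (A + E2) := mul_le_mul_of_nonneg_left h3 hK0.le
  have hT2 : ‖gradient (fun x'' => f x'' y) x - v‖ ≤ E1 + B := by
    calc ‖gradient (fun x'' => f x'' y) x - v‖ = ‖-(gx - gradient (fun x'' => f x'' y) x) + (gx - v)‖ := by congr 1; abel
      _ ≤ ‖-(gx - gradient (fun x'' => f x'' y) x)‖ + ‖gx - v‖ := norm_add_le _ _
      _ = ‖gx - gradient (fun x'' => f x'' y) x‖ + B := by rw [norm_neg, hB]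
      _ ≤ E1 + B := by linarith [hsm1]
  have hGle : ‖G‖ ≤ K * (A + E2) + (E1 + B) + V := by
    calc ‖G‖ = ‖(G - gradient (fun x'' => f x'' y) x) + ((gradient (fun x'' => f x'' y) x - v) + v)‖ := by congr 1; abel
      _ ≤ ‖G - gradient (fun x'' => f x'' y) x‖ + ‖(gradient (fun x'' => f x'' y) x - v) + v‖ := norm_add_le _ _
      _ ≤ ‖G - gradient (fun x'' => f x'' y) x‖ + (‖gradient (fun x'' => f x'' y) x - v‖ + ‖v‖) := by linarith [norm_add_le (gradient (fun x'' => f x'' y) x - v) v]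
      _ ≤ K * (A + E2) + (E1 + B) + V := by rw [hV]; linarith
  have hGsq : ‖G‖ ^ 2 ≤ (K * (A + E2) + (E1 + B) + V) ^ 2 := by
    have h0 : 0 ≤ ‖G‖ := norm_nonneg _
    nlinarith
  -- split squares
  have hsplit : (K * (A + E2) + (E1 + B) + V) ^ 2 ≤
      6 * K ^ 2 * A ^ 2 + 6 * K ^ 2 * E2 ^ 2 + 6 * E1 ^ 2 + 6 * B ^ 2 + 3 * V ^ 2 := by
    nlinarith [sq_nonneg (K * (A + E2) - (E1 + B)), sq_nonneg (K * (A + E2) - V),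
      sq_nonneg (E1 + B - V), sq_nonneg (A - E2), sq_nonneg (E1 - B), sq_nonneg K,
      mul_nonneg (sq_nonneg K) (sq_nonneg (A - E2))]
  -- constants
  have hcube1 : ((1:ℝ) + 3 * d1) ^ 2 ≤ ((d1 : ℝ) + 3) ^ 3 := by
    have : (0:ℝ) ≤ (d1 : ℝ) := Nat.cast_nonneg d1
    nlinarith
  have hcube2 : ((1:ℝ) + 3 * d2) ^ 2 ≤ ((d2 : ℝ) + 3) ^ 3 := by
    have : (0:ℝ) ≤ (d2 : ℝ) := Nat.cast_nonneg d2
    nlinarith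
  have hc1 : 6 * E1 ^ 2 ≤ 3 * (μ₁ ^ 2 / 2 * ℓ ^ 2 * ((d1 : ℝ) + 3) ^ 3) := by
    rw [hE1]
    have h := mul_le_mul_of_nonneg_left hcube1 (mul_nonneg (sq_nonneg ℓ) (sq_nonneg μ₁))
    nlinarith
  have hc2 : 6 * K ^ 2 * E2 ^ 2 ≤ 3 * (μ₂ ^ 2 * (K ^ 2 + 1) / 2 * ℓ ^ 2 * ((d2 : ℝ) + 3) ^ 3) := by
    rw [hE2]
    have h := mul_le_mul_of_nonneg_left hcube2
      (mul_nonneg (mul_nonneg (sq_nonneg K) (sq_nonneg ℓ)) (sq_nonneg μ₂))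
    have h3 : (0:ℝ) ≤ ((d2 : ℝ) + 3) ^ 3 := by positivity
    nlinarith [mul_nonneg (mul_nonneg (sq_nonneg ℓ) (sq_nonneg μ₂)) h3]
  have hu : (0:ℝ) ≤ 6 * ‖gy - u‖ ^ 2 := by positivity
  calc ‖G‖ ^ 2 ≤ 6 * K ^ 2 * A ^ 2 + 6 * K ^ 2 * E2 ^ 2 + 6 * E1 ^ 2 + 6 * B ^ 2 + 3 * V ^ 2 :=
        hGsq.trans hsplit
    _ ≤ 6 * K ^ 2 * A ^ 2 + 6 * (B ^ 2 + ‖gy - u‖ ^ 2) + 3 * V ^ 2 +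
        3 * (μ₂ ^ 2 * (K ^ 2 + 1) / 2 * ℓ ^ 2 * ((d2 : ℝ) + 3) ^ 3 +
          μ₁ ^ 2 / 2 * ℓ ^ 2 * ((d1 : ℝ) + 3) ^ 3) := by linarith
end
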